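/- For every x ∈ ℝ², every invertible real 2×2 matrix A, and every measurable ξ : ℝ² × ℝ → ℂ, one has ∫_{ℝ²×ℝ} |(σ₂[x,A]ξ)(ω, ω₃)|² dω dω₃/(‖ω‖²|ω₃|) = |det A| · ∫_{ℝ²×ℝ} |ξ(ω, ω₃)|² dω dω₃/(‖ω‖²|ω₃|), both sides possibly infinite. In particular, if ξ belongs to the domain D_T = {ξ ∈ L²(ℝ²×ℝ;ℂ) : ∫∫ |ξ(ω,ω₃)|²/(‖ω‖²|ω₃|) dω dω₃ < ∞}, then so does σ₂[x,A]ξ. -/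

import Mathlib

open MeasureTheory Matrix
open scoped ENNReal

noncomputable section

/-- `‖ω‖²`, the squared Euclidean norm of the row vector `ω`. -/
def nsq (ω : Fin 2 → ℝ) : ℝ := ω 0 ^ 2 + ω 1 ^ 2

/-- `u_{ω,A}` for a row vector `ω = (ω 0, ω 1)` and a matrix
`A = [[a, b], [c, d]] = [[A 0 0, A 0 1], [A 1 0, A 1 1]]`. -/
def uu (ω : Fin 2 → ℝ) (A : Matrix (Fin 2) (Fin 2) ℝ) : ℝ :=
  ((A 0 0 * A 1 0 + A 0 1 * A 1 1) * (ω 0 ^ 2 - ω 1 ^ 2)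
      - (A 0 0 ^ 2 + A 0 1 ^ 2 - A 1 0 ^ 2 - A 1 1 ^ 2) * (ω 0 * ω 1))
    / ((A 0 0 * ω 0 + A 1 0 * ω 1) ^ 2 + (A 0 1 * ω 0 + A 1 1 * ω 1) ^ 2)

/-- `v_{ω,A}`. -/
def vv (ω : Fin 2 → ℝ) (A : Matrix (Fin 2) (Fin 2) ℝ) : ℝ :=
  ((A 0 0 * A 1 1 - A 0 1 * A 1 0) * (ω 0 ^ 2 + ω 1 ^ 2))
    / ((A 0 0 * ω 0 + A 1 0 * ω 1) ^ 2 + (A 0 1 * ω 0 + A 1 1 * ω 1) ^ 2)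

/-- The operator `σ₂[x,A]` on functions of `(ω, ω₃) ∈ ℝ² × ℝ`:
`(σ₂[x,A]ξ)(ω, ω₃) = (|det A|·‖ω‖/‖ωA‖)·e^{2πi(ω·x + ω₃·u_{ω,A})}·ξ(ωA, ω₃·v_{ω,A})`. -/
def sigma2 (x : Fin 2 → ℝ) (A : Matrix (Fin 2) (Fin 2) ℝ)
    (ξ : (Fin 2 → ℝ) × ℝ → ℂ) : (Fin 2 → ℝ) × ℝ → ℂ := fun p =>
  (((|A.det| * Real.sqrt (nsq p.1) / Real.sqrt (nsq (vecMul p.1 A))) : ℝ) : ℂ)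
    * Complex.exp (((2 * Real.pi * (p.1 0 * x 0 + p.1 1 * x 1 + p.2 * uu p.1 A)) : ℝ) * Complex.I)
    * ξ (vecMul p.1 A, p.2 * vv p.1 A)

lemma nsq_nonneg (ω : Fin 2 → ℝ) : 0 ≤ nsq ω := by unfold nsq; positivity

lemma nsq_pos {ω : Fin 2 → ℝ} (h : ω ≠ 0) : 0 < nsq ω := by
  rcases (nsq_nonneg ω).lt_or_eq with h' | h'
  · exact h'
  · exfalso; apply h
    have hz : ω 0 ^ 2 + ω 1 ^ 2 = 0 := by rw [← nsq, ← h']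
    have h1 : ω 0 ^ 2 = 0 := by nlinarith [sq_nonneg (ω 0), sq_nonneg (ω 1)]
    have h2 : ω 1 ^ 2 = 0 := by nlinarith [sq_nonneg (ω 0), sq_nonneg (ω 1)]
    have h1' : ω 0 = 0 := by exact pow_eq_zero_iff (two_ne_zero) |>.mp h1
    have h2' : ω 1 = 0 := by exact pow_eq_zero_iff (two_ne_zero) |>.mp h2
    funext i; fin_cases i <;> simpa

lemma vecMul_ne_zero {A : Matrix (Fin 2) (Fin 2) ℝ} (hA : A.det ≠ 0)
    {ω : Fin 2 → ℝ} (h : ω ≠ 0) : vecMul ω A ≠ 0 := by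
  intro h0
  apply h
  have hinv : vecMul (vecMul ω A) A⁻¹ = ω := by
    rw [vecMul_vecMul, Matrix.mul_nonsing_inv _ (isUnit_iff_ne_zero.2 hA), vecMul_one]
  rw [h0, zero_vecMul] at hinv
  exact hinv.symm

lemma nsq_vecMul (ω : Fin 2 → ℝ) (A : Matrix (Fin 2) (Fin 2) ℝ) :
    nsq (vecMul ω A) =
      (A 0 0 * ω 0 + A 1 0 * ω 1) ^ 2 + (A 0 1 * ω 0 + A 1 1 * ω 1) ^ 2 := by
  simp [nsq, vecMul, dotProduct, Fin.sum_univ_two]; ring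

lemma vv_eq (ω : Fin 2 → ℝ) (A : Matrix (Fin 2) (Fin 2) ℝ) :
    vv ω A = A.det * nsq ω / nsq (vecMul ω A) := by
  rw [vv, nsq_vecMul, Matrix.det_fin_two, nsq]

lemma abs_vv (ω : Fin 2 → ℝ) (A : Matrix (Fin 2) (Fin 2) ℝ) :
    |vv ω A| = |A.det| * nsq ω / nsq (vecMul ω A) := by
  rw [vv_eq, abs_div, abs_mul, abs_of_nonneg (nsq_nonneg _), abs_of_nonneg (nsq_nonneg _)]

lemma measurable_nsq : Measurable nsq := by
  unfold nsq
  exact ((measurable_pi_apply 0).pow_const 2).add ((measurable_pi_apply 1).pow_const 2)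

lemma measurable_vecMul (A : Matrix (Fin 2) (Fin 2) ℝ) :
    Measurable fun ω : Fin 2 → ℝ => vecMul ω A := by
  have hlin : (fun ω : Fin 2 → ℝ => vecMul ω A) = ⇑(Matrix.toLin' Aᵀ) := by
    funext ω; rw [Matrix.toLin'_apply, Matrix.mulVec_transpose]
  rw [hlin]
  exact (LinearMap.continuous_of_finiteDimensional _).measurable

lemma measurable_vv (A : Matrix (Fin 2) (Fin 2) ℝ) :
    Measurable fun ω : Fin 2 → ℝ => vv ω A := by
  unfold vv
  refine Measurable.div ?_ ?_
  · exact measurable_const.mul (((measurable_pi_apply 0).pow_const 2).add ((measurable_pi_apply 1).pow_const 2))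
  · exact (((measurable_const.mul (measurable_pi_apply 0)).add (measurable_const.mul (measurable_pi_apply 1))).pow_const 2).add
      (((measurable_const.mul (measurable_pi_apply 0)).add (measurable_const.mul (measurable_pi_apply 1))).pow_const 2)

lemma ae_ne_zero_vec : ∀ᵐ ω : Fin 2 → ℝ, ω ≠ 0 := by
  rw [MeasureTheory.ae_iff]
  have : {ω : Fin 2 → ℝ | ¬ ω ≠ 0} = {0} := by ext ω; simp
  rw [this]
  exact measure_singleton 0

lemma core (A : Matrix (Fin 2) (Fin 2) ℝ) (hA : A.det ≠ 0)
    (g : (Fin 2 → ℝ) × ℝ → ℝ≥0∞) (hg : Measurable g) :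
    ∫⁻ p : (Fin 2 → ℝ) × ℝ,
        ENNReal.ofReal |vv p.1 A| * g (vecMul p.1 A, p.2 * vv p.1 A)
      = ENNReal.ofReal |A.det|⁻¹ * ∫⁻ p : (Fin 2 → ℝ) × ℝ, g p := by
  have hT : Measurable fun p : (Fin 2 → ℝ) × ℝ => (vecMul p.1 A, p.2 * vv p.1 A) :=
    ((measurable_vecMul A).comp measurable_fst).prodMk
      (measurable_snd.mul ((measurable_vv A).comp measurable_fst))
  have hF : Measurable fun p : (Fin 2 → ℝ) × ℝ =>
      ENNReal.ofReal |vv p.1 A| * g (vecMul p.1 A, p.2 * vv p.1 A) :=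
    (ENNReal.measurable_ofReal.comp
      (((measurable_vv A).comp measurable_fst).abs)).mul (hg.comp hT)
  rw [Measure.volume_eq_prod, lintegral_prod _ hF.aemeasurable, lintegral_prod _ hg.aemeasurable]
  have h2 : ∀ᵐ ω : Fin 2 → ℝ,
      (∫⁻ t : ℝ, ENNReal.ofReal |vv ω A| * g (vecMul ω A, t * vv ω A))
        = ∫⁻ s : ℝ, g (vecMul ω A, s) := by
    filter_upwards [ae_ne_zero_vec] with ω hω
    have hv : vv ω A ≠ 0 := by
      rw [vv_eq]
      exact div_ne_zero (mul_ne_zero hA (nsq_pos hω).ne')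
        (nsq_pos (vecMul_ne_zero hA hω)).ne'
    have hmeas : Measurable fun s : ℝ => g (vecMul ω A, s) :=
      hg.comp measurable_prodMk_left
    rw [lintegral_const_mul (f := fun t : ℝ => g (vecMul ω A, t * vv ω A)) _
      (hg.comp (measurable_const.prodMk (measurable_id.mul_const _)))]
    have hmap : (∫⁻ t : ℝ, g (vecMul ω A, t * vv ω A))
        = ENNReal.ofReal |(vv ω A)⁻¹| * ∫⁻ s : ℝ, g (vecMul ω A, s) := by
      rw [← lintegral_map hmeas (measurable_mul_const (vv ω A)),
        Real.map_volume_mul_right hv, lintegral_smul_measure, smul_eq_mul]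
    rw [hmap, ← mul_assoc, ← ENNReal.ofReal_mul (abs_nonneg _), abs_inv,
      mul_inv_cancel₀ (abs_ne_zero.2 hv), ENNReal.ofReal_one, one_mul]
  rw [lintegral_congr_ae h2]
  have hh : Measurable fun η : Fin 2 → ℝ => ∫⁻ s : ℝ, g (η, s) :=
    hg.lintegral_prod_right'
  have hlin : (fun ω : Fin 2 → ℝ => vecMul ω A) = ⇑(Matrix.toLin' Aᵀ) := by
    funext ω; rw [Matrix.toLin'_apply, Matrix.mulVec_transpose]
  calc (∫⁻ ω : Fin 2 → ℝ, ∫⁻ s : ℝ, g (vecMul ω A, s))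
      = ∫⁻ η : Fin 2 → ℝ, (∫⁻ s : ℝ, g (η, s))
          ∂(Measure.map (⇑(Matrix.toLin' Aᵀ)) volume) := by
        rw [lintegral_map hh ((LinearMap.continuous_of_finiteDimensional _).measurable)]
        simp only [← hlin]
    _ = ENNReal.ofReal |A.det|⁻¹ * ∫⁻ η : Fin 2 → ℝ, ∫⁻ s : ℝ, g (η, s) := by
        rw [Real.map_matrix_volume_pi_eq_smul_volume_pi
            (by rwa [Matrix.det_transpose]), lintegral_smul_measure,
          Matrix.det_transpose, abs_inv, smul_eq_mul]

lemma measurable_uu (A : Matrix (Fin 2) (Fin 2) ℝ) :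
    Measurable fun ω : Fin 2 → ℝ => uu ω A := by
  unfold uu
  refine Measurable.div ?_ ?_
  · exact (measurable_const.mul (((measurable_pi_apply 0).pow_const 2).sub
      ((measurable_pi_apply 1).pow_const 2))).sub
      (measurable_const.mul ((measurable_pi_apply 0).mul (measurable_pi_apply 1)))
  · exact (((measurable_const.mul (measurable_pi_apply 0)).add
      (measurable_const.mul (measurable_pi_apply 1))).pow_const 2).add
      (((measurable_const.mul (measurable_pi_apply 0)).add
        (measurable_const.mul (measurable_pi_apply 1))).pow_const 2)

lemma measurable_sigma2 (x : Fin 2 → ℝ) (A : Matrix (Fin 2) (Fin 2) ℝ)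
    (ξ : (Fin 2 → ℝ) × ℝ → ℂ) (hξ : Measurable ξ) : Measurable (sigma2 x A ξ) := by
  unfold sigma2
  refine Measurable.mul (Measurable.mul ?_ ?_) ?_
  · exact Complex.measurable_ofReal.comp
      ((measurable_const.mul ((measurable_nsq.comp measurable_fst).sqrt)).div
        ((measurable_nsq.comp ((measurable_vecMul A).comp measurable_fst)).sqrt))
  · refine Complex.measurable_exp.comp ?_
    refine Measurable.mul_const ?_ Complex.I
    refine Complex.measurable_ofReal.comp ?_
    have h0 : Measurable fun p : (Fin 2 → ℝ) × ℝ => p.1 0 :=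
      (measurable_pi_apply 0).comp measurable_fst
    have h1 : Measurable fun p : (Fin 2 → ℝ) × ℝ => p.1 1 :=
      (measurable_pi_apply 1).comp measurable_fst
    exact measurable_const.mul (((h0.mul_const (x 0)).add (h1.mul_const (x 1))).add
      (measurable_snd.mul ((measurable_uu A).comp measurable_fst)))
  · exact hξ.comp (((measurable_vecMul A).comp measurable_fst).prodMk
      (measurable_snd.mul ((measurable_vv A).comp measurable_fst)))

lemma norm_sigma2 (x : Fin 2 → ℝ) (A : Matrix (Fin 2) (Fin 2) ℝ)
    (ξ : (Fin 2 → ℝ) × ℝ → ℂ) (p : (Fin 2 → ℝ) × ℝ) :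
    ‖sigma2 x A ξ p‖ = |A.det| * Real.sqrt (nsq p.1) / Real.sqrt (nsq (vecMul p.1 A))
      * ‖ξ (vecMul p.1 A, p.2 * vv p.1 A)‖ := by
  have hc : 0 ≤ |A.det| * Real.sqrt (nsq p.1) / Real.sqrt (nsq (vecMul p.1 A)) := by positivity
  simp only [sigma2, norm_mul, Complex.norm_exp_ofReal_mul_I, mul_one,
    Complex.norm_real, Real.norm_eq_abs, abs_of_nonneg hc]

/-- `σ₂[x,A]` scales the weighted integral `∫∫ |ξ|² dω dω₃/(‖ω‖²|ω₃|)` by `|det A|`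
(both sides possibly infinite); in particular `σ₂[x,A]` maps the domain
`D_T = {ξ ∈ L² : ∫∫ |ξ|²/(‖ω‖²|ω₃|) < ∞}` into itself. -/
theorem sigma2_weighted (x : Fin 2 → ℝ) (A : Matrix (Fin 2) (Fin 2) ℝ)
    (hA : A.det ≠ 0) (ξ : (Fin 2 → ℝ) × ℝ → ℂ) (hξ : Measurable ξ) :
    (∫⁻ p : (Fin 2 → ℝ) × ℝ,
        (‖sigma2 x A ξ p‖₊ : ℝ≥0∞) ^ 2 * ENNReal.ofReal (nsq p.1 * |p.2|)⁻¹
      = ENNReal.ofReal |A.det| *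
        ∫⁻ p : (Fin 2 → ℝ) × ℝ, (‖ξ p‖₊ : ℝ≥0∞) ^ 2 * ENNReal.ofReal (nsq p.1 * |p.2|)⁻¹) ∧
    ((MemLp ξ 2 (volume : Measure ((Fin 2 → ℝ) × ℝ)) ∧
        ∫⁻ p : (Fin 2 → ℝ) × ℝ,
          (‖ξ p‖₊ : ℝ≥0∞) ^ 2 * ENNReal.ofReal (nsq p.1 * |p.2|)⁻¹ < ⊤) →
      (MemLp (sigma2 x A ξ) 2 (volume : Measure ((Fin 2 → ℝ) × ℝ)) ∧
        ∫⁻ p : (Fin 2 → ℝ) × ℝ,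
          (‖sigma2 x A ξ p‖₊ : ℝ≥0∞) ^ 2 * ENNReal.ofReal (nsq p.1 * |p.2|)⁻¹ < ⊤)) := by
  have hT : Measurable fun p : (Fin 2 → ℝ) × ℝ => (vecMul p.1 A, p.2 * vv p.1 A) :=
    ((measurable_vecMul A).comp measurable_fst).prodMk
      (measurable_snd.mul ((measurable_vv A).comp measurable_fst))
  have hg₁ : Measurable fun q : (Fin 2 → ℝ) × ℝ =>
      (‖ξ q‖₊ : ℝ≥0∞) ^ 2 * ENNReal.ofReal (nsq q.1 * |q.2|)⁻¹ :=
    (hξ.nnnorm.coe_nnreal_ennreal.pow_const 2).mul (ENNReal.measurable_ofReal.comp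
      (((measurable_nsq.comp measurable_fst).mul measurable_snd.abs).inv))
  have hg₂ : Measurable fun q : (Fin 2 → ℝ) × ℝ => (‖ξ q‖₊ : ℝ≥0∞) ^ 2 :=
    hξ.nnnorm.coe_nnreal_ennreal.pow_const 2
  have hnull1 : (volume : Measure ((Fin 2 → ℝ) × ℝ)) {p | p.1 = 0} = 0 := by
    rw [Measure.volume_eq_prod]
    have hs : {p : (Fin 2 → ℝ) × ℝ | p.1 = 0}
        = ({0} : Set (Fin 2 → ℝ)) ×ˢ (Set.univ : Set ℝ) := by
      ext p; simp [Set.mem_prod]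
    rw [hs, Measure.prod_prod, measure_singleton, zero_mul]
  have hnull2 : (volume : Measure ((Fin 2 → ℝ) × ℝ)) {p | p.2 = 0} = 0 := by
    rw [Measure.volume_eq_prod]
    have hs : {p : (Fin 2 → ℝ) × ℝ | p.2 = 0}
        = (Set.univ : Set (Fin 2 → ℝ)) ×ˢ ({0} : Set ℝ) := by
      ext p; simp [Set.mem_prod]
    rw [hs, Measure.prod_prod, measure_singleton, mul_zero]
  have hae : ∀ᵐ p : (Fin 2 → ℝ) × ℝ, p.1 ≠ 0 ∧ p.2 ≠ 0 := by
    rw [MeasureTheory.ae_iff]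
    refine measure_mono_null (fun p hp => ?_) (measure_union_null hnull1 hnull2)
    simp only [Set.mem_setOf_eq, not_and_or, not_not] at hp
    simpa using hp
  have claimA : ∀ᵐ p : (Fin 2 → ℝ) × ℝ,
      (‖sigma2 x A ξ p‖₊ : ℝ≥0∞) ^ 2 * ENNReal.ofReal (nsq p.1 * |p.2|)⁻¹
        = ENNReal.ofReal (|A.det| ^ 2) *
          (ENNReal.ofReal |vv p.1 A| *
            ((‖ξ (vecMul p.1 A, p.2 * vv p.1 A)‖₊ : ℝ≥0∞) ^ 2 *
              ENNReal.ofReal (nsq (vecMul p.1 A) * |p.2 * vv p.1 A|)⁻¹)) := by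
    filter_upwards [hae] with p hp
    obtain ⟨h1, h2⟩ := hp
    have hn := nsq_pos h1
    have hm := nsq_pos (vecMul_ne_zero hA h1)
    have hD : (0:ℝ) < |A.det| := abs_pos.2 hA
    have ht : |p.2| ≠ 0 := abs_ne_zero.2 h2
    have hreal : ‖sigma2 x A ξ p‖ ^ 2 * (nsq p.1 * |p.2|)⁻¹
        = |A.det| ^ 2 * (|vv p.1 A| * (‖ξ (vecMul p.1 A, p.2 * vv p.1 A)‖ ^ 2 *
            (nsq (vecMul p.1 A) * |p.2 * vv p.1 A|)⁻¹)) := by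
      rw [norm_sigma2, abs_mul, abs_vv, mul_pow, div_pow, mul_pow,
        Real.sq_sqrt hn.le, Real.sq_sqrt hm.le]
      field_simp
    calc (‖sigma2 x A ξ p‖₊ : ℝ≥0∞) ^ 2 * ENNReal.ofReal (nsq p.1 * |p.2|)⁻¹
        = ENNReal.ofReal (‖sigma2 x A ξ p‖ ^ 2 * (nsq p.1 * |p.2|)⁻¹) := by
          rw [← enorm_eq_nnnorm, ← ofReal_norm, ← ENNReal.ofReal_pow (norm_nonneg _),
            ← ENNReal.ofReal_mul (by positivity)]
      _ = ENNReal.ofReal (|A.det| ^ 2 * (|vv p.1 A| *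
            (‖ξ (vecMul p.1 A, p.2 * vv p.1 A)‖ ^ 2 *
              (nsq (vecMul p.1 A) * |p.2 * vv p.1 A|)⁻¹))) := by rw [hreal]
      _ = _ := by
          rw [ENNReal.ofReal_mul (by positivity), ENNReal.ofReal_mul (abs_nonneg _),
            ENNReal.ofReal_mul (by positivity), ← enorm_eq_nnnorm, ← ofReal_norm,
            ← ENNReal.ofReal_pow (norm_nonneg _)]
  have claimB : ∀ᵐ p : (Fin 2 → ℝ) × ℝ,
      (‖sigma2 x A ξ p‖₊ : ℝ≥0∞) ^ 2
        = ENNReal.ofReal |A.det| *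
          (ENNReal.ofReal |vv p.1 A| *
            (‖ξ (vecMul p.1 A, p.2 * vv p.1 A)‖₊ : ℝ≥0∞) ^ 2) := by
    filter_upwards [hae] with p hp
    obtain ⟨h1, _⟩ := hp
    have hn := nsq_pos h1
    have hm := nsq_pos (vecMul_ne_zero hA h1)
    have hreal : ‖sigma2 x A ξ p‖ ^ 2
        = |A.det| * (|vv p.1 A| * ‖ξ (vecMul p.1 A, p.2 * vv p.1 A)‖ ^ 2) := by
      rw [norm_sigma2, abs_vv, mul_pow, div_pow, mul_pow,
        Real.sq_sqrt hn.le, Real.sq_sqrt hm.le]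
      field_simp
    calc (‖sigma2 x A ξ p‖₊ : ℝ≥0∞) ^ 2
        = ENNReal.ofReal (‖sigma2 x A ξ p‖ ^ 2) := by
          rw [← enorm_eq_nnnorm, ← ofReal_norm, ← ENNReal.ofReal_pow (norm_nonneg _)]
      _ = _ := by
          rw [hreal, ENNReal.ofReal_mul (abs_nonneg _), ENNReal.ofReal_mul (abs_nonneg _),
            ← enorm_eq_nnnorm, ← ofReal_norm, ← ENNReal.ofReal_pow (norm_nonneg _)]
  have hcore1 := core A hA
    (fun q => (‖ξ q‖₊ : ℝ≥0∞) ^ 2 * ENNReal.ofReal (nsq q.1 * |q.2|)⁻¹) hg₁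
  simp only at hcore1
  have hmeas1 : Measurable fun p : (Fin 2 → ℝ) × ℝ =>
      ENNReal.ofReal |vv p.1 A| *
        ((‖ξ (vecMul p.1 A, p.2 * vv p.1 A)‖₊ : ℝ≥0∞) ^ 2 *
          ENNReal.ofReal (nsq (vecMul p.1 A) * |p.2 * vv p.1 A|)⁻¹) :=
    (ENNReal.measurable_ofReal.comp ((measurable_vv A).comp measurable_fst).abs).mul
      (hg₁.comp hT)
  have key1 : (∫⁻ p : (Fin 2 → ℝ) × ℝ,
        (‖sigma2 x A ξ p‖₊ : ℝ≥0∞) ^ 2 * ENNReal.ofReal (nsq p.1 * |p.2|)⁻¹)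
      = ENNReal.ofReal |A.det| *
        ∫⁻ p : (Fin 2 → ℝ) × ℝ, (‖ξ p‖₊ : ℝ≥0∞) ^ 2 * ENNReal.ofReal (nsq p.1 * |p.2|)⁻¹ := by
    rw [lintegral_congr_ae claimA, lintegral_const_mul _ hmeas1, hcore1, ← mul_assoc,
      ← ENNReal.ofReal_mul (by positivity)]
    congr 2
    rw [sq, mul_assoc, mul_inv_cancel₀ (abs_ne_zero.2 hA), mul_one]
  have hcore2 := core A hA (fun q => (‖ξ q‖₊ : ℝ≥0∞) ^ 2) hg₂
  have hmeas2 : Measurable fun p : (Fin 2 → ℝ) × ℝ =>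
      ENNReal.ofReal |vv p.1 A| * (‖ξ (vecMul p.1 A, p.2 * vv p.1 A)‖₊ : ℝ≥0∞) ^ 2 :=
    (ENNReal.measurable_ofReal.comp ((measurable_vv A).comp measurable_fst).abs).mul
      (hg₂.comp hT)
  have key2 : (∫⁻ p : (Fin 2 → ℝ) × ℝ, (‖sigma2 x A ξ p‖₊ : ℝ≥0∞) ^ 2)
      = ∫⁻ p : (Fin 2 → ℝ) × ℝ, (‖ξ p‖₊ : ℝ≥0∞) ^ 2 := by
    rw [lintegral_congr_ae claimB, lintegral_const_mul _ hmeas2, hcore2, ← mul_assoc,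
      ← ENNReal.ofReal_mul (abs_nonneg _), mul_inv_cancel₀ (abs_ne_zero.2 hA),
      ENNReal.ofReal_one, one_mul]
  refine ⟨key1, ?_⟩
  rintro ⟨hmem, hfin⟩
  have hp2 : ∀ y : ℝ≥0∞, y ^ (2 : ℝ≥0∞).toReal = y ^ (2 : ℕ) := by
    intro y
    rw [ENNReal.toReal_ofNat, show ((2:ℝ)) = ((2:ℕ):ℝ) by norm_num, ENNReal.rpow_natCast]
  constructor
  · refine ⟨(measurable_sigma2 x A ξ hξ).aestronglyMeasurable, ?_⟩
    rw [eLpNorm_lt_top_iff_lintegral_rpow_enorm_lt_top (by norm_num) (by norm_num)]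
    simp only [hp2, enorm_eq_nnnorm]
    rw [key2]
    have h' := (eLpNorm_lt_top_iff_lintegral_rpow_enorm_lt_top (f := ξ)
      (by norm_num) (by norm_num)).mp hmem.2
    simpa only [hp2, enorm_eq_nnnorm] using h'
  · rw [key1]
    exact ENNReal.mul_lt_top ENNReal.ofReal_lt_top hfin
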